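/- Let X be a chain. For every order-preserving partial transformation α of X there exists an injective order-preserving partial transformation β of X such that αβα = α. In particular, the monoid PO(X) of all order-preserving partial transformations of X is regular. -/

import Mathlib

variable {X : Type*}

/-- The partial transformation `f` is order-preserving (on its domain). -/
def IsOrdPartial [LinearOrder X] (f : X →. X) : Prop :=
  ∀ ⦃x y u v : X⦄, x ≤ y → u ∈ f x → v ∈ f y → u ≤ v

/-- For every order-preserving partial transformation `α` there is an injective
order-preserving partial transformation `β` with `αβα = α` (left factor applied first);
in particular, the monoid `PO(X)` is regular. -/
theorem stmt8 (X : Type*) [LinearOrder X] (α : X →. X) (hα : IsOrdPartial α) :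
    ∃ β : X →. X, IsOrdPartial β ∧ (∀ ⦃x y u : X⦄, u ∈ β x → u ∈ β y → x = y) ∧
      α.comp (β.comp α) = α := by
  classical
  refine ⟨fun y => ⟨∃ x, y ∈ α x, fun h => Classical.choose h⟩, ?_, ?_, ?_⟩
  · intro x y u v hxy hu hv
    obtain ⟨hx, rfl⟩ := hu
    obtain ⟨hy, rfl⟩ := hv
    by_contra hlt
    push_neg at hlt
    have h1 : x ∈ α (Classical.choose hx) := Classical.choose_spec hx
    have h2 : y ∈ α (Classical.choose hy) := Classical.choose_spec hy
    have : y ≤ x := hα hlt.le h2 h1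
    have hxy' : x = y := le_antisymm hxy this
    subst hxy'
    exact absurd rfl hlt.ne'
  · intro x y u hu hv
    obtain ⟨hx, rfl⟩ := hu
    obtain ⟨hy, he⟩ := hv
    have h1 : x ∈ α (Classical.choose hx) := Classical.choose_spec hx
    have h2 : y ∈ α (Classical.choose hy) := Classical.choose_spec hy
    have he' : Classical.choose hy = Classical.choose hx := he
    rw [he'] at h2
    exact Part.mem_unique h1 h2
  · apply PFun.ext
    intro x a
    show a ∈ ((α x).bind (fun y => (⟨∃ x, y ∈ α x, fun h => Classical.choose h⟩ : Part X))).bind α ↔ a ∈ α x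
    constructor
    · intro hm
      obtain ⟨b, hb, ha⟩ := Part.mem_bind_iff.mp hm
      obtain ⟨y, hy, ⟨h, rfl⟩⟩ := Part.mem_bind_iff.mp hb
      have : y ∈ α (Classical.choose h) := Classical.choose_spec h
      rwa [Part.mem_unique ha this]
    · intro ha
      have h : ∃ x', a ∈ α x' := ⟨x, ha⟩
      exact Part.mem_bind_iff.mpr ⟨Classical.choose h, Part.mem_bind_iff.mpr ⟨a, ha, ⟨h, rfl⟩⟩, Classical.choose_spec h⟩
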